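/- Let M be an indecomposable affine generalized Cartan matrix with smallest positive imaginary root δ = Σ_i a_i α_i, where all a_i ∈ ℤ_{>0}, and suppose δ(α_j^∨) = 0 for all j. Fix λ ∈ Y^{++}. Then (λ − Q_+^∨) ∩ Y^{++} is contained in {y ∈ Y^{++} : δ(y) = δ(λ)}, and the image of this set in the quotient V/ℝc (where ℝc = ∩_i Ker α_i) is finite; consequently (λ − Q_+^∨) ∩ Y^{++} is a finite union of sets of the form μ − ℤ_{≥0}·c with μ ∈ Y^{++}. -/

import Mathlib

private lemma stmt13_aux_mod (n b : ℕ) (h : 0 < b) : n - n / b * b < b := by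
  have h2 := Nat.div_add_mod n b
  have h3 := Nat.mod_lt n h
  rw [mul_comm]
  generalize b * (n / b) = e at h2 ⊢
  omega



/-- Section 2.12 (affine indecomposable case): let `δ = Σ a_i α_i` (all `a_i ∈ ℤ_{>0}`)
be the smallest positive imaginary root, vanishing on all coroots, and
`c = Σ a_i^∨ α_i^∨` (all `a_i^∨ ∈ ℤ_{>0}`) the canonical central element, with
`ℝc = ∩_i Ker α_i` inside the span of the coroots.  For a dominant `λ ∈ Y`, the set
`(λ - Q_+^∨) ∩ Y^{++}` is contained in `{y ∈ Y^{++} : δ(y) = δ(λ)}`, its image in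
`V/ℝc` is finite, and it is a finite union of sets `μ - ℤ_{≥0}·c` with `μ ∈ Y^{++}`. -/
theorem stmt13 {V : Type*} [NormedAddCommGroup V] [NormedSpace ℝ V]
    [FiniteDimensional ℝ V] {I : Type*} [Fintype I] [Nonempty I]
    (α : I → Module.Dual ℝ V) (coroot : I → V)
    (hli : LinearIndependent ℝ coroot)
    (a : I → ℤ) (ha : ∀ i, 0 < a i)
    (adual : I → ℤ) (hadual : ∀ i, 0 < adual i)
    (δ : Module.Dual ℝ V) (hδ : δ = ∑ i, (a i : ℝ) • α i)
    (hδc : ∀ j, δ (coroot j) = 0)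
    (c : V) (hc : c = ∑ i, (adual i : ℝ) • coroot i)
    (hαc : ∀ i, α i c = 0)
    (hker : ∀ v ∈ Submodule.span ℝ (Set.range coroot),
      (∀ i, α i v = 0) → ∃ s : ℝ, v = s • c)
    (Y : AddSubgroup V) (hQY : ∀ i, coroot i ∈ Y)
    (hdisc : ∀ C : ℝ, {y : V | y ∈ Y ∧ ‖y‖ ≤ C}.Finite)
    (lam : V) (hlamY : lam ∈ Y) (hlamdom : ∀ i, 0 ≤ α i lam) :
    let Qp : Set V := {q | ∃ n : I → ℕ, q = ∑ i, (n i : ℝ) • coroot i}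
    let Ypp : Set V := {y | y ∈ Y ∧ ∀ i, 0 ≤ α i y}
    let S : Set V := {y | y ∈ Ypp ∧ ∃ q ∈ Qp, y = lam - q}
    (S ⊆ {y ∈ Ypp | δ y = δ lam}) ∧
    ((⇑(Submodule.span ℝ {c}).mkQ) '' S).Finite ∧
    (∃ F : Finset V, ↑F ⊆ Ypp ∧ S = ⋃ μ ∈ F, {x | ∃ n : ℕ, x = μ - (n : ℝ) • c}) := by
  intro Qp Ypp S
  classical
  -- the linear map sending coefficients to combinations of coroots
  set L : (I → ℝ) →ₗ[ℝ] V :=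
    { toFun := fun n => ∑ i, n i • coroot i
      map_add' := by
        intro m n
        simp [add_smul, Finset.sum_add_distrib]
      map_smul' := by
        intro s n
        simp [smul_smul, Finset.smul_sum] } with hLdef
  have hLapp : ∀ n : I → ℝ, L n = ∑ i, n i • coroot i := fun n => rfl
  set b : I → ℕ := fun i => (adual i).toNat with hbdef
  have hbR : ∀ i, ((b i : ℕ) : ℝ) = ((adual i : ℤ) : ℝ) := by
    intro i
    rw [hbdef]
    norm_cast
    exact_mod_cast Int.toNat_of_nonneg (hadual i).le
  have hbpos : ∀ i, 0 < b i := by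
    intro i
    have h1 := hadual i
    show 0 < (adual i).toNat
    omega
  have hLc : L (fun i => ((adual i : ℤ) : ℝ)) = c := by rw [hLapp, hc]
  have hcY : c ∈ Y := by
    rw [hc]
    refine AddSubgroup.sum_mem Y fun i _ => ?_
    rw [Int.cast_smul_eq_zsmul]
    exact AddSubgroup.zsmul_mem Y (hQY i) _
  have hcoeff : ∀ m : I → ℝ, L m = 0 → ∀ i, m i = 0 := by
    intro m hm
    exact Fintype.linearIndependent_iff.1 hli m (by rw [← hLapp]; exact hm)
  have hδL : ∀ m : I → ℝ, δ (L m) = 0 := by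
    intro m
    rw [hLapp, map_sum]
    simp [hδc]
  -- Part 1
  have part1 : S ⊆ {y ∈ Ypp | δ y = δ lam} := by
    rintro y ⟨hy, q, ⟨n, rfl⟩, rfl⟩
    refine ⟨hy, ?_⟩
    have h0 := hδL (fun i => (n i : ℝ))
    rw [hLapp] at h0
    rw [map_sub, h0, sub_zero]
  have hδsum : ∀ v : V, δ v = ∑ i, (a i : ℝ) * α i v := by
    intro v; rw [hδ]; simp
  have hδlam0 : 0 ≤ δ lam := by
    rw [hδsum]
    refine Finset.sum_nonneg fun i _ => ?_
    have h1 := ha i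
    have h2 := hlamdom i
    positivity
  have hub : ∀ y ∈ S, ∀ j, α j y ≤ δ lam := by
    intro y hy j
    obtain ⟨hyYpp, hyδ⟩ := part1 hy
    have h1 : (a j : ℝ) * α j y ≤ ∑ i, (a i : ℝ) * α i y := by
      refine Finset.single_le_sum (f := fun i => (a i : ℝ) * α i y) ?_ (Finset.mem_univ j)
      intro i _
      have h3 := ha i; have h4 := hyYpp.2 i
      positivity
    have haj : (1 : ℝ) ≤ (a j : ℝ) := by exact_mod_cast ha j
    have h2 : α j y ≤ (a j : ℝ) * α j y := by nlinarith [hyYpp.2 j]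
    calc α j y ≤ (a j : ℝ) * α j y := h2
      _ ≤ ∑ i, (a i : ℝ) * α i y := h1
      _ = δ y := (hδsum y).symm
      _ = δ lam := hyδ
  -- auxiliary injective maps
  set Φ : I → ((I → ℝ) →ₗ[ℝ] ((I → ℝ) × ℝ)) :=
    fun i0 => (LinearMap.pi fun j => (α j).comp L).prod (LinearMap.proj i0) with hΦ
  have hΦapp : ∀ i0 (m : I → ℝ), Φ i0 m = (fun j => α j (L m), m i0) := fun _ _ => rfl
  have hΦker : ∀ i0, LinearMap.ker (Φ i0) = ⊥ := by
    intro i0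
    rw [LinearMap.ker_eq_bot']
    intro m hm
    rw [hΦapp, Prod.mk_eq_zero] at hm
    obtain ⟨hm1, hm2⟩ := hm
    have hα0 : ∀ j, α j (L m) = 0 := fun j => congrFun hm1 j
    have hmem : L m ∈ Submodule.span ℝ (Set.range coroot) := by
      rw [hLapp]
      exact Submodule.sum_mem _ fun i _ =>
        Submodule.smul_mem _ _ (Submodule.subset_span ⟨i, rfl⟩)
    obtain ⟨s, hs⟩ := hker (L m) hmem hα0
    have hz : L (m - s • fun i => ((adual i : ℤ) : ℝ)) = 0 := by
      rw [map_sub, map_smul, hLc, hs, sub_self]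
    have hmi : ∀ i, m i = s * (adual i : ℝ) := by
      intro i
      have h0 := hcoeff _ hz i
      simpa [sub_eq_zero] using h0
    have hs0 : s = 0 := by
      have h0 := hmi i0
      rw [hm2] at h0
      have hne : ((adual i0 : ℤ) : ℝ) ≠ 0 := by exact_mod_cast (hadual i0).ne'
      exact (mul_eq_zero.1 h0.symm).resolve_right hne
    funext i
    rw [hmi i, hs0, zero_mul]
    simp
  have hKex : ∀ i0 : I, ∃ K : NNReal, 0 < K ∧ AntilipschitzWith K (Φ i0) :=
    fun i0 => (Φ i0).exists_antilipschitzWith (hΦker i0)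
  choose K hKpos hKanti using hKex
  -- constants
  set A : ℝ := Finset.univ.sup' Finset.univ_nonempty (fun j => |α j lam|) with hA
  have hA0 : 0 ≤ A := by
    obtain ⟨j⟩ := ‹Nonempty I›
    refine le_trans (abs_nonneg (α j lam)) ?_
    rw [hA]
    exact Finset.le_sup' (fun j => |α j lam|) (Finset.mem_univ j)
  set Cα : ℝ := A + δ lam with hCα
  have hCα0 : 0 ≤ Cα := by rw [hCα]; linarith
  set Bd : I → ℝ :=
    fun i0 => ‖lam‖ + (∑ i, ‖coroot i‖) * ((K i0 : ℝ) * max Cα (b i0)) with hBd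
  set C : ℝ := Finset.univ.sup' Finset.univ_nonempty Bd with hCdef
  -- the key norm bound for "reduced" elements of S
  have key : ∀ y ∈ S, ∀ n : I → ℕ, y = lam - L (fun i => (n i : ℝ)) →
      ∀ i0, n i0 < b i0 → ‖y‖ ≤ C := by
    intro y hyS n hyn i0 hni0
    set m : I → ℝ := fun i => (n i : ℝ) with hm
    have hLm : L m = lam - y := by rw [hyn, sub_sub_cancel]
    have hcomp : ∀ j, |α j (L m)| ≤ Cα := by
      intro j
      have h1 : α j (L m) = α j lam - α j y := by rw [hLm, map_sub]
      have h2 : |α j lam| ≤ A := by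
        rw [hA]; exact Finset.le_sup' (fun j => |α j lam|) (Finset.mem_univ j)
      have h3 := hub y hyS j
      have h4 := (part1 hyS).1.2 j
      rw [h1, abs_le, hCα]
      constructor
      · linarith [neg_abs_le (α j lam)]
      · linarith [le_abs_self (α j lam)]
    have hΦnorm : ‖Φ i0 m‖ ≤ max Cα (b i0) := by
      rw [hΦapp, Prod.norm_def]
      refine max_le_max ?_ ?_
      · exact (pi_norm_le_iff_of_nonneg hCα0).2 fun j => hcomp j
      · rw [hm]
        simp only [Real.norm_natCast]
        exact_mod_cast hni0.le
    have hmn : ‖m‖ ≤ (K i0 : ℝ) * max Cα (b i0) := by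
      have h := (hKanti i0).le_mul_dist m 0
      rw [dist_zero_right, map_zero, dist_zero_right] at h
      have hK0 : (0:ℝ) ≤ (K i0 : ℝ) := (K i0).coe_nonneg
      exact le_trans h (mul_le_mul_of_nonneg_left hΦnorm hK0)
    have hLmn : ‖L m‖ ≤ (∑ i, ‖coroot i‖) * ‖m‖ := by
      rw [hLapp]
      calc ‖∑ i, m i • coroot i‖ ≤ ∑ i, ‖m i • coroot i‖ := norm_sum_le _ _
        _ = ∑ i, ‖m i‖ * ‖coroot i‖ := by simp [norm_smul]
        _ ≤ ∑ i, ‖m‖ * ‖coroot i‖ :=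
            Finset.sum_le_sum fun i _ =>
              mul_le_mul_of_nonneg_right (norm_le_pi_norm m i) (norm_nonneg _)
        _ = (∑ i, ‖coroot i‖) * ‖m‖ := by rw [← Finset.mul_sum, mul_comm]
    have hm0 : 0 ≤ ‖m‖ := norm_nonneg _
    have hsum0 : 0 ≤ ∑ i, ‖coroot i‖ := Finset.sum_nonneg fun i _ => norm_nonneg _
    have hy : ‖y‖ ≤ Bd i0 := by
      rw [hBd]
      calc ‖y‖ = ‖lam - L m‖ := by rw [hyn]
        _ ≤ ‖lam‖ + ‖L m‖ := norm_sub_le _ _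
        _ ≤ ‖lam‖ + (∑ i, ‖coroot i‖) * ‖m‖ := by linarith
        _ ≤ ‖lam‖ + (∑ i, ‖coroot i‖) * ((K i0 : ℝ) * max Cα (b i0)) :=
            add_le_add_right (mul_le_mul_of_nonneg_left hmn hsum0) _
    refine le_trans hy ?_
    rw [hCdef]
    exact Finset.le_sup' Bd (Finset.mem_univ i0)
  -- the reduced set
  set Sred : Set V := {y | y ∈ S ∧ ∃ n : I → ℕ,
    y = lam - L (fun i => (n i : ℝ)) ∧ ∃ i0, n i0 < b i0} with hSreddef
  have hSredfin : Sred.Finite := by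
    refine (hdisc C).subset ?_
    rintro y ⟨hyS, n, hyn, i0, hni0⟩
    exact ⟨hyS.1.1, key y hyS n hyn i0 hni0⟩
  set F : Finset V := hSredfin.toFinset with hF
  have hFS : ∀ μ ∈ F, μ ∈ Sred := by
    intro μ hμ
    rwa [hF, Set.Finite.mem_toFinset] at hμ
  -- translates of elements of S by -ℕ•c stay in S
  have hstep : ∀ μ ∈ S, ∀ k : ℕ, μ - (k : ℝ) • c ∈ S := by
    rintro μ ⟨⟨hμY, hμdom⟩, q, ⟨n, rfl⟩, rfl⟩ k
    refine ⟨⟨?_, ?_⟩, ?_⟩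
    · have h1 : (∑ i, ((n i : ℕ) : ℝ) • coroot i) ∈ Y := by
        refine AddSubgroup.sum_mem Y fun i _ => ?_
        rw [Nat.cast_smul_eq_nsmul]
        exact AddSubgroup.nsmul_mem Y (hQY i) _
      have h2 : (k : ℝ) • c ∈ Y := by
        rw [Nat.cast_smul_eq_nsmul]
        exact AddSubgroup.nsmul_mem Y hcY _
      exact AddSubgroup.sub_mem Y (AddSubgroup.sub_mem Y hlamY h1) h2
    · intro i
      rw [map_sub, map_smul, hαc, smul_eq_mul, mul_zero, sub_zero]
      exact hμdom i
    · refine ⟨(∑ i, ((n i : ℕ) : ℝ) • coroot i) + (k : ℝ) • c,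
        ⟨fun i => n i + k * b i, ?_⟩, by abel⟩
      rw [hc, Finset.smul_sum, ← Finset.sum_add_distrib]
      refine Finset.sum_congr rfl fun i _ => ?_
      rw [smul_smul, ← add_smul]
      congr 1
      rw [← hbR i]
      push_cast
      ring
  -- S is the union over F of the c-strings
  have hunion : S = ⋃ μ ∈ F, {x | ∃ k : ℕ, x = μ - (k : ℝ) • c} := by
    ext y
    simp only [Set.mem_iUnion, Set.mem_setOf_eq]
    constructor
    · rintro ⟨hyYpp, q, ⟨n, hqn⟩, hyq⟩
      have hyS : y ∈ S := ⟨hyYpp, q, ⟨n, hqn⟩, hyq⟩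
      have hyn : y = lam - L (fun i => (n i : ℝ)) := by rw [hyq, hqn, hLapp]
      set mmin : ℕ := Finset.univ.inf' Finset.univ_nonempty (fun i => n i / b i) with hmmin
      obtain ⟨i0, -, hi0⟩ := Finset.exists_mem_eq_inf' Finset.univ_nonempty (fun i => n i / b i)
      have hle : ∀ i, mmin * b i ≤ n i := by
        intro i
        have h1 : mmin ≤ n i / b i := by
          rw [hmmin]; exact Finset.inf'_le _ (Finset.mem_univ i)
        calc mmin * b i ≤ (n i / b i) * b i := Nat.mul_le_mul_right _ h1
          _ ≤ n i := Nat.div_mul_le_self _ _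
      set n' : I → ℕ := fun i => n i - mmin * b i with hn'
      have hmmeq : mmin = n i0 / b i0 := by simpa using hi0
      have hn'i0 : n' i0 < b i0 := by
        have h1 := hbpos i0
        have h2 := Nat.div_add_mod (n i0) (b i0)
        have h3 := Nat.mod_lt (n i0) h1
        show n i0 - mmin * b i0 < b i0
        rw [hmmeq]
        exact stmt13_aux_mod (n i0) (b i0) h1
      have hsplit : (fun i => ((n i : ℕ) : ℝ)) =
          (fun i => ((n' i : ℕ) : ℝ)) + (mmin : ℝ) • (fun i => ((adual i : ℤ) : ℝ)) := by
        funext i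
        have h1 := hle i
        simp only [Pi.add_apply, Pi.smul_apply, smul_eq_mul]
        rw [← hbR i, hn']
        simp only
        rw [Nat.cast_sub h1]
        push_cast
        ring
      set μ : V := lam - L (fun i => ((n' i : ℕ) : ℝ)) with hμdef
      have hLsplit : L (fun i => ((n i : ℕ) : ℝ)) =
          L (fun i => ((n' i : ℕ) : ℝ)) + (mmin : ℝ) • c := by
        rw [hsplit, map_add, map_smul, hLc]
      have hyμ : y = μ - (mmin : ℝ) • c := by
        rw [hyn, hLsplit, hμdef]; abel
      have hμy : μ = y + (mmin : ℝ) • c := by rw [hyμ]; abel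
      have hμY : μ ∈ Y := by
        rw [hμy, Nat.cast_smul_eq_nsmul]
        exact AddSubgroup.add_mem Y hyYpp.1 (AddSubgroup.nsmul_mem Y hcY _)
      have hμdom : ∀ i, 0 ≤ α i μ := by
        intro i
        rw [hμy, map_add, map_smul, hαc, smul_eq_mul, mul_zero, add_zero]
        exact hyYpp.2 i
      have hμS : μ ∈ S :=
        ⟨⟨hμY, hμdom⟩, L (fun i => ((n' i : ℕ) : ℝ)), ⟨n', hLapp _⟩, hμdef⟩
      have hμSred : μ ∈ Sred := ⟨hμS, n', hμdef, i0, hn'i0⟩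
      exact ⟨μ, by rw [hF, Set.Finite.mem_toFinset]; exact hμSred, mmin, hyμ⟩
    · rintro ⟨μ, hμF, k, rfl⟩
      exact hstep μ (hFS μ hμF).1 k
  refine ⟨part1, ?_, F, ?_, hunion⟩
  · refine Set.Finite.subset (F.finite_toSet.image (⇑(Submodule.span ℝ ({c} : Set V)).mkQ)) ?_
    rintro x ⟨y, hyS, rfl⟩
    rw [hunion] at hyS
    simp only [Set.mem_iUnion, Set.mem_setOf_eq] at hyS
    obtain ⟨μ, hμF, k, rfl⟩ := hyS
    refine ⟨μ, hμF, ?_⟩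
    rw [Submodule.mkQ_apply, Submodule.mkQ_apply, Submodule.Quotient.eq]
    exact Submodule.mem_span_singleton.2 ⟨(k : ℝ), (sub_sub_cancel μ _).symm⟩
  · intro μ hμ
    exact ((hFS μ (by exact_mod_cast hμ)).1).1
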